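/- Suppose the two environments share the same second-moment matrix, Σ₁ = Σ₂ = Σ with Σ symmetric positive definite (while ρ₁, ρ₂ may differ). For actions w = (w₁, w₂), define the utility gradient of environment e as v_e(w) = 2ρ_e − 2Σ(w₁ + w₂). Then the pure Nash equilibria of the constrained game C-LRG are variationally stable: for every pure Nash equilibrium (w₁†, w₂†) of C-LRG and every (w₁, w₂) ∈ 𝒲 × 𝒲, it holds that v₁(w)ᵀ(w₁ − w₁†) + v₂(w)ᵀ(w₂ − w₂†) ≤ 0. -/

import Mathlib

open Matrix

/-- Risk of an environment with second-moment matrix `S` and cross-moment vector `ρ`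
at the joint action `(w₁, w₂)`:  `(w₁+w₂)ᵀ S (w₁+w₂) − 2 ρᵀ (w₁+w₂)`. -/
noncomputable def risk {n : ℕ} (S : Matrix (Fin n) (Fin n) ℝ) (ρ : Fin n → ℝ)
    (w₁ w₂ : Fin n → ℝ) : ℝ :=
  (w₁ + w₂) ⬝ᵥ (S *ᵥ (w₁ + w₂)) - 2 * (ρ ⬝ᵥ (w₁ + w₂))

/-- If `a*t + b*t^2 ≥ 0` for all small positive `t` and `b ≥ 0`, then `a ≥ 0`. -/
lemma clrg_aux_scalar (a b : ℝ) (hb : 0 ≤ b)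
    (h : ∀ t : ℝ, 0 < t → t ≤ 1 → 0 ≤ a * t + b * t ^ 2) : 0 ≤ a := by
  by_contra hlt
  push_neg at hlt
  set t : ℝ := min 1 (-a / (2 * (b + 1))) with ht
  have hb1 : (0:ℝ) < b + 1 := by linarith
  have htpos : 0 < t := lt_min one_pos (div_pos (by linarith) (by linarith))
  have ht1 : t ≤ 1 := min_le_left _ _
  have h0 := h t htpos ht1
  -- from 0 ≤ a*t + b*t², divide by t : -a ≤ b*t
  have h1 : -a ≤ b * t := by
    have : 0 ≤ (a + b * t) * t := by nlinarith
    nlinarith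
  have h2 : b * t ≤ (b + 1) * t := by nlinarith
  have h3 : (b + 1) * t ≤ -a / 2 := by
    have : t ≤ -a / (2 * (b + 1)) := min_le_right _ _
    calc (b + 1) * t ≤ (b + 1) * (-a / (2 * (b + 1))) := by nlinarith
    _ = -a / 2 := by field_simp
  linarith

/-- Symmetric bilinear form commutes for a positive definite (hence Hermitian) matrix. -/
lemma clrg_aux_symm {n : ℕ} (S : Matrix (Fin n) (Fin n) ℝ) (hS : S.PosDef)
    (x y : Fin n → ℝ) : x ⬝ᵥ S *ᵥ y = y ⬝ᵥ S *ᵥ x := by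
  have h : Sᵀ = S := by
    have := hS.isHermitian; simpa [Matrix.IsHermitian, conjTranspose, Matrix.map, Matrix.transpose] using this
  rw [dotProduct_mulVec, ← mulVec_transpose, h, dotProduct_comm]

/-- Nonnegativity of the quadratic form. -/
lemma clrg_aux_psd {n : ℕ} (S : Matrix (Fin n) (Fin n) ℝ) (hS : S.PosDef)
    (x : Fin n → ℝ) : 0 ≤ x ⬝ᵥ S *ᵥ x := by
  simpa using hS.posSemidef.re_dotProduct_nonneg x

/-- First-order optimality: if `w₁d` minimizes its risk over the ball, then the gradient
inequality holds. -/
lemma clrg_aux_foc {n : ℕ} (S : Matrix (Fin n) (Fin n) ℝ) (hS : S.PosDef)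
    (ρ : Fin n → ℝ) (W : ℝ) (wd z : Fin n → ℝ) (hwd : ‖wd‖ ≤ W)
    (hN : ∀ u : Fin n → ℝ, ‖u‖ ≤ W → risk S ρ wd z ≤ risk S ρ u z)
    (w : Fin n → ℝ) (hw : ‖w‖ ≤ W) :
    0 ≤ (S *ᵥ (wd + z)) ⬝ᵥ (w - wd) - ρ ⬝ᵥ (w - wd) := by
  set σ : Fin n → ℝ := wd + z with hσ
  set δ : Fin n → ℝ := w - wd with hδ
  refine clrg_aux_scalar _ (δ ⬝ᵥ S *ᵥ δ) (clrg_aux_psd S hS δ) ?_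
  intro t htpos ht1
  have hnorm : ‖wd + t • δ‖ ≤ W := by
    have heq : wd + t • δ = (1 - t) • wd + t • w := by
      simp only [hδ]; module
    rw [heq]
    calc ‖(1 - t) • wd + t • w‖ ≤ ‖(1 - t) • wd‖ + ‖t • w‖ := norm_add_le _ _
      _ = (1 - t) * ‖wd‖ + t * ‖w‖ := by
          rw [norm_smul, norm_smul, Real.norm_eq_abs, Real.norm_eq_abs,
            abs_of_nonneg (by linarith), abs_of_nonneg (le_of_lt htpos)]
      _ ≤ (1 - t) * W + t * W := by
          have h0 : (0:ℝ) ≤ 1 - t := by linarith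
          have h1 : (0:ℝ) ≤ ‖wd‖ := norm_nonneg _
          nlinarith [norm_nonneg w]
      _ = W := by ring
  have h0 := hN (wd + t • δ) hnorm
  have hcross : δ ⬝ᵥ S *ᵥ σ = σ ⬝ᵥ S *ᵥ δ := clrg_aux_symm S hS δ σ
  have hexp : risk S ρ (wd + t • δ) z - risk S ρ wd z =
      ((S *ᵥ σ) ⬝ᵥ δ - ρ ⬝ᵥ δ) * (2 * t) + (δ ⬝ᵥ S *ᵥ δ) * t ^ 2 := by
    have harr : wd + t • δ + z = σ + t • δ := by simp only [hσ]; module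
    rw [risk, risk, harr, ← hσ]
    have hσδ : (S *ᵥ σ) ⬝ᵥ δ = σ ⬝ᵥ S *ᵥ δ := (dotProduct_comm _ _).trans hcross
    simp only [mulVec_add, mulVec_smul, dotProduct_add, add_dotProduct,
      dotProduct_smul, smul_dotProduct, smul_eq_mul, hσδ, hcross]
    ring
  have hq : 0 ≤ ((S *ᵥ σ) ⬝ᵥ δ - ρ ⬝ᵥ δ) * (2 * t) + (δ ⬝ᵥ S *ᵥ δ) * t ^ 2 := by
    rw [← hexp]; linarith
  -- goal : 0 ≤ ((S *ᵥ σ) ⬝ᵥ δ - ρ ⬝ᵥ δ) * t + ...  with a = (S*ᵥσ)⬝ᵥδ - ρ⬝ᵥδ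
  nlinarith [clrg_aux_psd S hS δ, sq_nonneg t]

/-- **variational stability when `Σ₁ = Σ₂`.** Suppose both environments
share the same positive definite second-moment matrix `S` (while `ρ₁, ρ₂` may differ),
and let `v_e(w) = 2ρ_e − 2S(w₁+w₂)` be the utility gradient of environment `e`.
Then every pure Nash equilibrium `(w₁†, w₂†)` of C-LRG is variationally stable:
for all `(w₁, w₂) ∈ 𝒲 × 𝒲`, `v₁(w)ᵀ(w₁ − w₁†) + v₂(w)ᵀ(w₂ − w₂†) ≤ 0`. -/
theorem clrg_variational_stability {n : ℕ}
    (S : Matrix (Fin n) (Fin n) ℝ) (hS : S.PosDef)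
    (ρ₁ ρ₂ : Fin n → ℝ) (W : ℝ) (hW : 0 < W)
    (w₁d w₂d : Fin n → ℝ) (hw₁d : ‖w₁d‖ ≤ W) (hw₂d : ‖w₂d‖ ≤ W)
    (hN₁ : ∀ u : Fin n → ℝ, ‖u‖ ≤ W → risk S ρ₁ w₁d w₂d ≤ risk S ρ₁ u w₂d)
    (hN₂ : ∀ v : Fin n → ℝ, ‖v‖ ≤ W → risk S ρ₂ w₁d w₂d ≤ risk S ρ₂ w₁d v)
    (w₁ w₂ : Fin n → ℝ) (hw₁ : ‖w₁‖ ≤ W) (hw₂ : ‖w₂‖ ≤ W) :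
    ((2 : ℝ) • ρ₁ - (2 : ℝ) • (S *ᵥ (w₁ + w₂))) ⬝ᵥ (w₁ - w₁d) +
    ((2 : ℝ) • ρ₂ - (2 : ℝ) • (S *ᵥ (w₁ + w₂))) ⬝ᵥ (w₂ - w₂d) ≤ 0 := by
  have hN₂' : ∀ v : Fin n → ℝ, ‖v‖ ≤ W → risk S ρ₂ w₂d w₁d ≤ risk S ρ₂ v w₁d := by
    intro v hv
    have h1 : risk S ρ₂ w₂d w₁d = risk S ρ₂ w₁d w₂d := by rw [risk, risk, add_comm]
    have h2 : risk S ρ₂ v w₁d = risk S ρ₂ w₁d v := by rw [risk, risk, add_comm]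
    rw [h1, h2]; exact hN₂ v hv
  have foc₁ := clrg_aux_foc S hS ρ₁ W w₁d w₂d hw₁d hN₁ w₁ hw₁
  have foc₂ := clrg_aux_foc S hS ρ₂ W w₂d w₁d hw₂d hN₂' w₂ hw₂
  set δ : Fin n → ℝ := w₁ - w₁d with hδ
  set ε : Fin n → ℝ := w₂ - w₂d with hε
  have harr : w₂d + w₁d = w₁d + w₂d := add_comm _ _
  rw [harr] at foc₂
  have hd : w₁ + w₂ = (w₁d + w₂d) + (δ + ε) := by simp only [hδ, hε]; module
  have hpsd : 0 ≤ (δ + ε) ⬝ᵥ S *ᵥ (δ + ε) := clrg_aux_psd S hS (δ + ε)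
  have hexp : ((2 : ℝ) • ρ₁ - (2 : ℝ) • (S *ᵥ (w₁ + w₂))) ⬝ᵥ δ +
      ((2 : ℝ) • ρ₂ - (2 : ℝ) • (S *ᵥ (w₁ + w₂))) ⬝ᵥ ε =
      -2 * ((S *ᵥ (w₁d + w₂d)) ⬝ᵥ δ - ρ₁ ⬝ᵥ δ)
      - 2 * ((S *ᵥ (w₁d + w₂d)) ⬝ᵥ ε - ρ₂ ⬝ᵥ ε)
      - 2 * ((δ + ε) ⬝ᵥ S *ᵥ (δ + ε)) := by
    have hc : (S *ᵥ (δ + ε)) ⬝ᵥ (δ + ε) = (δ + ε) ⬝ᵥ S *ᵥ (δ + ε) := dotProduct_comm _ _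
    rw [hd]
    simp only [mulVec_add, sub_dotProduct, smul_dotProduct, smul_eq_mul,
      add_dotProduct, dotProduct_add] at hc ⊢
    ring_nf
    ring_nf at hc
    linarith
  rw [hexp]
  linarith
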